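/- arXiv:2502.04859 — 4 statements merged into one kernel-verified Lean document; each statement's English description precedes it below -/
import Mathlib

section
/- Let Ω: ℝ → ℝ satisfy |Ω(x) − Ω(y)| ≤ K₀|x−y|^α for all x, y ∈ ℝ, where α ∈ (0,1) and K₀ > 0, and assume Ω ∈ L¹(ℝ, (1+x²)^{−1} dx). Then for every t > 0 the function Q̃_t Ω is differentiable on ℝ, with (Q̃_t Ω)'(x) = (1/π) ∫_ℝ (Ω(x−y) − Ω(x)) (t² − y²)/((y²+t²)²) dy, and |(Q̃_t Ω)'(x)| ≤ K₀ t^{α−1} / cos(πα/2) for every x ∈ ℝ. -/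
open MeasureTheory Real Set Filter Topology

lemma exp_int {b : ℝ} (hb : 0 < b) : ∫ s in Ioi (0:ℝ), Real.exp (-b * s) = 1/b := by
  have := integral_exp_neg_mul_rpow (p := 1) (b := b) one_pos hb
  simp only [Real.rpow_one] at this
  rw [this]
  rw [show (-1)/(1:ℝ) = -1 by norm_num, Real.rpow_neg_one, show (1:ℝ)/1 + 1 = 2 by norm_num,
    Real.Gamma_two]
  simp [one_div]

lemma cont_rd {α t : ℝ} (h0 : 0 < α) (ht : 0 < t) :
    Continuous (fun y : ℝ => y ^ α / (y ^ 2 + t ^ 2)) := by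
  apply (Real.continuous_rpow_const h0.le).div (by continuity)
  intro y; positivity

lemma intOn_rpow_div {α t : ℝ} (h0 : 0 < α) (h1 : α < 1) (ht : 0 < t) :
    IntegrableOn (fun y : ℝ => y ^ α / (y ^ 2 + t ^ 2)) (Ioi 0) := by
  have h12 : Ioi (0:ℝ) = Ioc 0 1 ∪ Ioi 1 := by
    rw [Ioc_union_Ioi_eq_Ioi]; norm_num
  rw [h12, integrableOn_union]
  constructor
  · apply Measure.integrableOn_of_bounded (M := 1 / t ^ 2) measure_Ioc_lt_top.ne
      (cont_rd h0 ht).aestronglyMeasurable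
    filter_upwards [ae_restrict_mem measurableSet_Ioc] with y hy
    have hy0 : 0 < y := hy.1
    have hy1 : y ≤ 1 := hy.2
    rw [Real.norm_eq_abs, abs_div, abs_of_nonneg (Real.rpow_nonneg hy0.le _),
      abs_of_pos (by positivity)]
    have h1' : y ^ α ≤ 1 := Real.rpow_le_one hy0.le hy1 h0.le
    have h2' : t ^ 2 ≤ y ^ 2 + t ^ 2 := by nlinarith
    calc y ^ α / (y ^ 2 + t ^ 2) ≤ 1 / (y^2 + t^2) :=
          div_le_div_of_nonneg_right h1' (by positivity) |>.trans le_rfl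
        _ ≤ 1 / t ^ 2 := one_div_le_one_div_of_le (by positivity) h2'
  · apply Integrable.mono' (g := fun y : ℝ => y ^ (α - 2))
      (integrableOn_Ioi_rpow_of_lt (by linarith) one_pos)
      (cont_rd h0 ht).aestronglyMeasurable
    filter_upwards [ae_restrict_mem measurableSet_Ioi] with y hy
    have hy1 : (1:ℝ) < y := hy
    have hy0 : (0:ℝ) < y := by linarith
    have h2 : y ^ (2:ℝ) = y ^ 2 := by
      rw [show (2:ℝ) = ((2:ℕ):ℝ) by norm_num, Real.rpow_natCast]
    rw [Real.norm_eq_abs, abs_div, abs_of_nonneg (Real.rpow_nonneg hy0.le _),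
      abs_of_pos (by positivity), Real.rpow_sub hy0, h2]
    apply div_le_div_of_nonneg_left (Real.rpow_pos_of_pos hy0 α).le (by positivity) (by nlinarith)

lemma key_int {α : ℝ} (h0 : 0 < α) (h1 : α < 1) :
    ∫ u in Ioi (0:ℝ), u ^ α / (1 + u ^ 2) = π / (2 * Real.cos (π * α / 2)) := by
  set a : ℝ := (α + 1) / 2 with ha
  have ha0 : 0 < a := by rw [ha]; linarith
  have ha1 : 0 < 1 - a := by rw [ha]; linarith
  set f : ℝ → ℝ → ℝ := fun u s => u ^ α * Real.exp (-(1 + u ^ 2) * s) with hf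
  have hmeas : AEStronglyMeasurable (Function.uncurry f)
      ((volume.restrict (Ioi (0:ℝ))).prod (volume.restrict (Ioi (0:ℝ)))) := by
    apply Continuous.aestronglyMeasurable
    apply Continuous.mul
    · exact (Real.continuous_rpow_const h0.le).comp continuous_fst
    · exact Real.continuous_exp.comp (by continuity)
  have hpoint : ∀ u : ℝ, 0 < u → ∫ s in Ioi (0:ℝ), f u s = u ^ α / (1 + u ^ 2) := by
    intro u hu
    rw [hf]
    simp only
    rw [MeasureTheory.integral_const_mul, exp_int (by positivity)]
    ring
  have hint_s : ∀ u : ℝ, Integrable (f u) (volume.restrict (Ioi (0:ℝ))) :=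
    fun u => ((exp_neg_integrableOn_Ioi 0 (show (0:ℝ) < 1 + u ^ 2 by positivity)).const_mul _)
  have hnonneg : ∀ u ∈ Ioi (0:ℝ), ∀ s : ℝ, 0 ≤ f u s := fun u hu s =>
    mul_nonneg (Real.rpow_nonneg (le_of_lt hu) _) (Real.exp_pos _).le
  have hbase : IntegrableOn (fun u : ℝ => u ^ α / (1 + u ^ 2)) (Ioi 0) :=
    (intOn_rpow_div h0 h1 one_pos).congr_fun
      (fun y _ => by rw [one_pow, add_comm]) measurableSet_Ioi
  have hIntProd : Integrable (Function.uncurry f)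
      ((volume.restrict (Ioi (0:ℝ))).prod (volume.restrict (Ioi (0:ℝ)))) := by
    rw [integrable_prod_iff hmeas]
    refine ⟨Filter.Eventually.of_forall fun u => hint_s u, ?_⟩
    apply hbase.congr
    filter_upwards [ae_restrict_mem measurableSet_Ioi] with u hu
    rw [← hpoint u hu]
    refine integral_congr_ae (Filter.Eventually.of_forall fun s => ?_)
    simp only [Function.uncurry]
    rw [Real.norm_eq_abs, abs_of_nonneg (hnonneg u hu s)]
  calc ∫ u in Ioi (0:ℝ), u ^ α / (1 + u ^ 2)
      = ∫ u in Ioi (0:ℝ), ∫ s in Ioi (0:ℝ), f u s := by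
        refine setIntegral_congr_fun measurableSet_Ioi fun u hu => ?_
        rw [hpoint u hu]
    _ = ∫ s in Ioi (0:ℝ), ∫ u in Ioi (0:ℝ), f u s := integral_integral_swap hIntProd
    _ = ∫ s in Ioi (0:ℝ), (Real.exp (-s) * s ^ ((1-a) - 1)) * ((1:ℝ)/2 * Real.Gamma a) := by
        refine setIntegral_congr_fun measurableSet_Ioi fun s hs => ?_
        have hs0 : (0:ℝ) < s := hs
        have h2 : ∫ u in Ioi (0:ℝ), f u s
            = ∫ u in Ioi (0:ℝ), Real.exp (-s) * (u ^ α * Real.exp (-s * u ^ (2:ℝ))) := by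
          refine setIntegral_congr_fun measurableSet_Ioi fun u hu => ?_
          rw [hf]
          simp only
          rw [show u ^ (2:ℝ) = u ^ 2 by
            rw [show (2:ℝ) = ((2:ℕ):ℝ) by norm_num, Real.rpow_natCast]]
          rw [show -(1 + u^2) * s = -s + -s * u^2 by ring, Real.exp_add]
          ring
        rw [h2, MeasureTheory.integral_const_mul,
          integral_rpow_mul_exp_neg_mul_rpow two_pos (by linarith) hs0]
        rw [show -(α + 1) / 2 = (1 - a) - 1 by rw [ha]; ring]
        ring
    _ = (Real.Gamma (1 - a)) * ((1:ℝ)/2 * Real.Gamma a) := by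
        rw [MeasureTheory.integral_mul_const, ← Real.Gamma_eq_integral ha1]
    _ = π / (2 * Real.cos (π * α / 2)) := by
        have hGG := Real.Gamma_mul_Gamma_one_sub a
        have hsin : Real.sin (π * a) = Real.cos (π * α / 2) := by
          rw [ha, show π * ((α+1)/2) = π/2 + π * α / 2 by ring, Real.sin_add,
            Real.sin_pi_div_two, Real.cos_pi_div_two]
          ring
        have hcos : 0 < Real.cos (π * α / 2) := by
          apply Real.cos_pos_of_mem_Ioo
          constructor <;> [nlinarith [Real.pi_pos]; nlinarith [Real.pi_pos]]
        rw [show Real.Gamma (1-a) * (1/2 * Real.Gamma a)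
            = Real.Gamma a * Real.Gamma (1 - a) / 2 by ring, hGG, hsin]
        ring

lemma abs_fun_eq {α t : ℝ} : (fun y : ℝ => |y| ^ α / (y ^ 2 + t ^ 2))
    = fun y : ℝ => |y| ^ α / (|y| ^ 2 + t ^ 2) := by
  funext y; rw [sq_abs]

lemma intR_rpow_div {α t : ℝ} (h0 : 0 < α) (h1 : α < 1) (ht : 0 < t) :
    Integrable (fun y : ℝ => |y| ^ α / (y ^ 2 + t ^ 2)) := by
  rw [abs_fun_eq]
  have hf : IntegrableOn (fun y : ℝ => |y| ^ α / (|y| ^ 2 + t ^ 2)) (Ioi 0) := by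
    refine (intOn_rpow_div h0 h1 ht).congr_fun (fun y hy => ?_) measurableSet_Ioi
    rw [abs_of_pos hy]
  have hIic : IntegrableOn (fun y : ℝ => |y| ^ α / (|y| ^ 2 + t ^ 2)) (Iic 0) := by
    rw [← Measure.map_neg_eq_self (volume : Measure ℝ)]
    have m : MeasurableEmbedding fun x : ℝ => -x := (Homeomorph.neg ℝ).measurableEmbedding
    rw [m.integrableOn_map_iff]
    simp_rw [Function.comp_def, abs_neg, neg_preimage, neg_Iic, neg_zero]
    exact Iff.mpr integrableOn_Ici_iff_integrableOn_Ioi hf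
  rw [← integrableOn_univ, ← Iic_union_Ioi (a := (0:ℝ))]
  exact hIic.union hf

lemma int_val {α t : ℝ} (h0 : 0 < α) (h1 : α < 1) (ht : 0 < t) :
    ∫ y : ℝ, |y| ^ α / (y ^ 2 + t ^ 2) = π * t ^ (α - 1) / Real.cos (π * α / 2) := by
  rw [abs_fun_eq]
  rw [show (fun y : ℝ => |y| ^ α / (|y| ^ 2 + t ^ 2))
      = (fun y : ℝ => (fun z : ℝ => z ^ α / (z ^ 2 + t ^ 2)) |y|) from rfl]
  rw [integral_comp_abs (f := fun z : ℝ => z ^ α / (z ^ 2 + t ^ 2))]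
  have hscale : ∫ y in Ioi (0:ℝ), y ^ α / (y ^ 2 + t ^ 2)
      = t ^ (α - 1) * ∫ u in Ioi (0:ℝ), u ^ α / (1 + u ^ 2) := by
    have := integral_comp_mul_left_Ioi (g := fun y : ℝ => y ^ α / (y ^ 2 + t ^ 2)) 0 ht
    rw [mul_zero] at this
    have heq : ∀ u ∈ Ioi (0:ℝ), (fun u : ℝ => (t * u) ^ α / ((t * u) ^ 2 + t ^ 2)) u
        = t ^ (α - 2 : ℝ) * (u ^ α / (1 + u ^ 2)) := by
      intro u hu
      have hu0 : (0:ℝ) < u := hu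
      simp only
      rw [Real.mul_rpow ht.le hu0.le, Real.rpow_sub ht,
        show t ^ (2:ℝ) = t ^ 2 by rw [show (2:ℝ) = ((2:ℕ):ℝ) by norm_num, Real.rpow_natCast]]
      rw [mul_pow]
      field_simp
      ring
    rw [setIntegral_congr_fun measurableSet_Ioi heq, MeasureTheory.integral_const_mul] at this
    rw [eq_comm, smul_eq_mul] at this
    have : ∫ y in Ioi (0:ℝ), y ^ α / (y ^ 2 + t ^ 2)
        = t * (t ^ (α - 2 : ℝ) * ∫ u in Ioi (0:ℝ), u ^ α / (1 + u ^ 2)) := by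
      rw [← this]; field_simp
    rw [this, ← mul_assoc]
    congr 1
    rw [show t * t ^ (α - 2 : ℝ) = t ^ (1:ℝ) * t ^ (α - 2:ℝ) by rw [Real.rpow_one],
      ← Real.rpow_add ht]
    congr 1
    ring
  rw [hscale, key_int h0 h1]
  ring

lemma kernel_hasDeriv {t : ℝ} (ht : 0 < t) (y : ℝ) :
    HasDerivAt (fun z : ℝ => z / (z ^ 2 + t ^ 2))
      ((t ^ 2 - y ^ 2) / (y ^ 2 + t ^ 2) ^ 2) y := by
  have hd : (y:ℝ) ^ 2 + t ^ 2 ≠ 0 := by positivity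
  have h := (hasDerivAt_id y).div ((hasDerivAt_pow 2 y).add_const (t ^ 2)) hd
  refine h.congr_deriv ?_
  simp only [id]
  ring

lemma kernel_le {t : ℝ} (ht : 0 < t) (y : ℝ) :
    |(t ^ 2 - y ^ 2) / (y ^ 2 + t ^ 2) ^ 2| ≤ 1 / (y ^ 2 + t ^ 2) := by
  rw [abs_div, abs_of_pos (by positivity : (0:ℝ) < (y ^ 2 + t ^ 2) ^ 2)]
  rw [div_le_div_iff₀ (by positivity) (by positivity)]
  have h1 : |t ^ 2 - y ^ 2| ≤ y ^ 2 + t ^ 2 := by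
    rw [abs_le]; constructor <;> nlinarith
  nlinarith [abs_nonneg (t ^ 2 - y ^ 2), sq_nonneg y, sq_nonneg t,
    mul_le_mul_of_nonneg_right h1 (le_of_lt (show (0:ℝ) < y ^ 2 + t ^ 2 by positivity))]

lemma kernel_integrable {t : ℝ} (ht : 0 < t) :
    Integrable (fun y : ℝ => (t ^ 2 - y ^ 2) / (y ^ 2 + t ^ 2) ^ 2) := by
  apply Integrable.mono' ((integrable_inv_one_add_sq).const_mul (1 / t ^ 2 + 1))
  · apply Continuous.aestronglyMeasurable
    apply Continuous.div (by continuity) (by continuity)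
    intro y; positivity
  · refine Filter.Eventually.of_forall fun y => ?_
    rw [Real.norm_eq_abs]
    refine (kernel_le ht y).trans ?_
    rw [← one_div (1 + y ^ 2), mul_one_div, div_le_div_iff₀ (by positivity) (by positivity)]
    have h0 : 0 < t ^ 2 := by positivity
    have : (1 / t ^ 2 + 1) * (y ^ 2 + t ^ 2) = y ^ 2 / t ^ 2 + 1 + y ^ 2 + t ^ 2 := by
      field_simp; ring
    rw [this]
    have hy : 0 ≤ y ^ 2 / t ^ 2 := by positivity
    nlinarith

lemma kernel_integral_zero {t : ℝ} (ht : 0 < t) :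
    ∫ y : ℝ, (t ^ 2 - y ^ 2) / (y ^ 2 + t ^ 2) ^ 2 = 0 := by
  have hint := kernel_integrable ht
  have htop : Tendsto (fun z : ℝ => z / (z ^ 2 + t ^ 2)) atTop (𝓝 0) := by
    apply squeeze_zero_norm' (a := fun z : ℝ => z⁻¹)
    · filter_upwards [eventually_ge_atTop (1:ℝ)] with z hz
      rw [Real.norm_eq_abs, abs_div, abs_of_nonneg (by linarith : (0:ℝ) ≤ z),
        abs_of_pos (by positivity : (0:ℝ) < z ^ 2 + t ^ 2)]
      rw [div_le_iff₀ (by positivity), inv_mul_eq_div, le_div_iff₀ (by linarith : (0:ℝ) < z)]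
      nlinarith
    · exact tendsto_inv_atTop_zero
  have hbot : Tendsto (fun z : ℝ => z / (z ^ 2 + t ^ 2)) atBot (𝓝 0) := by
    apply squeeze_zero_norm' (a := fun z : ℝ => (-z)⁻¹)
    · filter_upwards [eventually_le_atBot (-1:ℝ)] with z hz
      rw [Real.norm_eq_abs, abs_div, abs_of_nonpos (by linarith : z ≤ 0),
        abs_of_pos (by positivity : (0:ℝ) < z ^ 2 + t ^ 2)]
      rw [div_le_iff₀ (by positivity), inv_mul_eq_div, le_div_iff₀ (by linarith : (0:ℝ) < -z)]
      nlinarith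
    · exact tendsto_inv_atTop_zero.comp tendsto_neg_atBot_atTop
  have h1 : ∫ y in Iic (0:ℝ), (t ^ 2 - y ^ 2) / (y ^ 2 + t ^ 2) ^ 2 = 0 := by
    have := integral_Iic_of_hasDerivAt_of_tendsto' (a := 0) (m := 0)
      (f := fun z : ℝ => z / (z ^ 2 + t ^ 2))
      (fun z _ => kernel_hasDeriv ht z) (hint.integrableOn) hbot
    simpa using this
  have h2 : ∫ y in Ioi (0:ℝ), (t ^ 2 - y ^ 2) / (y ^ 2 + t ^ 2) ^ 2 = 0 := by
    have := integral_Ioi_of_hasDerivAt_of_tendsto' (a := 0) (m := 0)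
      (f := fun z : ℝ => z / (z ^ 2 + t ^ 2))
      (fun z _ => kernel_hasDeriv ht z) (hint.integrableOn) htop
    simpa using this
  have := integral_add_compl (measurableSet_Iic (a := (0:ℝ))) hint
  rw [compl_Iic] at this
  rw [← this, h1, h2, add_zero]

lemma kbound {t : ℝ} (ht : 0 < t) (u y : ℝ) :
    |(u - y) / ((u - y) ^ 2 + t ^ 2) + y / (y ^ 2 + 1)| ≤
      ((u ^ 2 + 4 * t * |u| + 1 + t ^ 2) / (2 * t)) * (1 / (1 + y ^ 2)) := by
  have hden : (0:ℝ) < ((u - y) ^ 2 + t ^ 2) * (y ^ 2 + 1) := by positivity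
  have hid : (u - y) / ((u - y) ^ 2 + t ^ 2) + y / (y ^ 2 + 1)
      = (u * y * (u - y) + (u - y) + t ^ 2 * y) / (((u - y) ^ 2 + t ^ 2) * (y ^ 2 + 1)) := by
    field_simp
    ring
  rw [hid, abs_div, abs_of_pos hden, mul_one_div,
    div_le_div_iff₀ hden (by positivity)]
  have key : |u * y * (u - y) + (u - y) + t ^ 2 * y|
      ≤ ((u ^ 2 + 4 * t * |u| + 1 + t ^ 2) / (2 * t)) * ((u - y) ^ 2 + t ^ 2) := by
    set z := u - y with hz
    have htri : |u * y * z + z + t ^ 2 * y| ≤ |u| * |y| * |z| + |z| + t ^ 2 * |y| := by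
      calc |u * y * z + z + t ^ 2 * y| ≤ |u * y * z + z| + |t ^ 2 * y| := abs_add_le _ _
        _ ≤ |u * y * z| + |z| + |t ^ 2 * y| := by
            have := abs_add_le (u * y * z) z
            linarith
        _ = |u| * |y| * |z| + |z| + t ^ 2 * |y| := by
            rw [abs_mul, abs_mul, abs_mul, abs_of_nonneg (sq_nonneg t)]
    refine htri.trans ?_
    rw [div_mul_eq_mul_div, le_div_iff₀ (by positivity)]
    set A := |u| with hA
    set B := |y| with hB
    set Z := |z| with hZ
    have hA0 : 0 ≤ A := abs_nonneg u
    have hB0 : 0 ≤ B := abs_nonneg y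
    have hZ0 : 0 ≤ Z := abs_nonneg z
    have hu2 : u ^ 2 = A ^ 2 := (sq_abs u).symm
    have hz2' : Z ^ 2 = z ^ 2 := sq_abs z
    have h1 : 2 * t * Z ≤ z ^ 2 + t ^ 2 := by
      nlinarith [sq_nonneg (Z - t)]
    have huz : u - z = y := by rw [hz]; ring
    have hy2 : B ≤ A + Z := by
      rw [hA, hB, hZ, ← huz]
      exact abs_sub u z
    have hz2 : Z ^ 2 ≤ z ^ 2 + t ^ 2 := by nlinarith
    have ht2 : t ^ 2 ≤ z ^ 2 + t ^ 2 := by nlinarith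
    rw [hu2]
    nlinarith [mul_le_mul_of_nonneg_left h1 (sq_nonneg A),
      mul_le_mul_of_nonneg_left h1 (sq_nonneg t),
      mul_le_mul_of_nonneg_left hy2 (show (0:ℝ) ≤ 2 * t * (A * Z) by positivity),
      mul_le_mul_of_nonneg_left hy2 (show (0:ℝ) ≤ 2 * t * t ^ 2 by positivity),
      mul_le_mul_of_nonneg_left hz2 (show (0:ℝ) ≤ 2 * t * A by positivity),
      mul_le_mul_of_nonneg_left ht2 (show (0:ℝ) ≤ 2 * t * A by positivity), ht]
  calc |u * y * (u - y) + (u - y) + t ^ 2 * y| * (1 + y ^ 2)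
      ≤ (((u ^ 2 + 4 * t * |u| + 1 + t ^ 2) / (2 * t)) * ((u - y) ^ 2 + t ^ 2)) * (1 + y ^ 2) :=
        mul_le_mul_of_nonneg_right key (by positivity)
    _ = (u ^ 2 + 4 * t * |u| + 1 + t ^ 2) / (2 * t) * (((u - y) ^ 2 + t ^ 2) * (y ^ 2 + 1)) := by
        ring

lemma dbound {t : ℝ} (ht : 0 < t) (u y : ℝ) :
    |(t ^ 2 - (u - y) ^ 2) / (((u - y) ^ 2 + t ^ 2) ^ 2)| ≤
      ((1 + 2 * u ^ 2) / t ^ 2 + 2) * (1 / (1 + y ^ 2)) := by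
  refine (kernel_le ht (u - y)).trans ?_
  rw [mul_one_div, div_le_div_iff₀ (by positivity) (by positivity)]
  have h : 1 + y ^ 2 ≤ 1 + 2 * u ^ 2 + 2 * (u - y) ^ 2 := by nlinarith [sq_nonneg (u + (u - y))]
  have expand : ((1 + 2 * u ^ 2) / t ^ 2 + 2) * ((u - y) ^ 2 + t ^ 2)
      = (1 + 2 * u ^ 2) * ((u - y) ^ 2 / t ^ 2) + (1 + 2 * u ^ 2) + 2 * (u - y) ^ 2
        + 2 * t ^ 2 := by
    field_simp
    ring
  rw [one_mul, expand]
  have h1 : (0:ℝ) ≤ (1 + 2 * u ^ 2) * ((u - y) ^ 2 / t ^ 2) := by positivity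
  nlinarith [sq_nonneg t, sq_nonneg (u - y)]

/-- For a Hölder continuous `Ω`, the modified conjugate Poisson transform `Q̃_tΩ` is
differentiable, its derivative is `(1/π)∫ (Ω(x-y)-Ω(x))(t²-y²)/(y²+t²)² dy`, and it
is bounded by `K₀ t^{α-1} / cos(πα/2)`. -/
theorem modified_conjPoisson_deriv_of_holder
    (Ω : ℝ → ℝ) (α K₀ : ℝ) (hα0 : 0 < α) (hα1 : α < 1) (hK : 0 < K₀)
    (hHolder : ∀ x y : ℝ, |Ω x - Ω y| ≤ K₀ * |x - y| ^ α)
    (hint : Integrable (fun x => Ω x / (1 + x ^ 2)))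
    (t : ℝ) (ht : 0 < t) (x : ℝ) :
    HasDerivAt (fun u : ℝ => (1 / π) * ∫ y : ℝ,
        Ω y * ((u - y) / ((u - y) ^ 2 + t ^ 2) + y / (y ^ 2 + 1)))
      ((1 / π) * ∫ y : ℝ, (Ω (x - y) - Ω x) * (t ^ 2 - y ^ 2) / (y ^ 2 + t ^ 2) ^ 2) x ∧
    |(1 / π) * ∫ y : ℝ, (Ω (x - y) - Ω x) * (t ^ 2 - y ^ 2) / (y ^ 2 + t ^ 2) ^ 2| ≤
      K₀ * t ^ (α - 1) / Real.cos (π * α / 2) := by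
  -- measurability of Ω
  have hΩm : AEStronglyMeasurable Ω volume := by
    have : Ω = fun y : ℝ => (Ω y / (1 + y ^ 2)) * (1 + y ^ 2) := by
      funext y
      field_simp
    rw [this]
    exact hint.aestronglyMeasurable.mul
      ((by fun_prop : Continuous fun y : ℝ => 1 + y ^ 2)).aestronglyMeasurable
  -- integrability of |Ω|/(1+y²)
  have hint' : Integrable (fun y : ℝ => |Ω y| / (1 + y ^ 2)) := by
    refine hint.abs.congr (Filter.Eventually.of_forall fun y => ?_)
    show |Ω y / (1 + y ^ 2)| = |Ω y| / (1 + y ^ 2)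
    rw [abs_div, abs_of_pos (by positivity : (0:ℝ) < 1 + y ^ 2)]
  -- Hölder bound specialized
  have hHol : ∀ y : ℝ, |Ω (x - y) - Ω x| ≤ K₀ * |y| ^ α := by
    intro y
    have := hHolder (x - y) x
    rwa [show x - y - x = -y by ring, abs_neg] at this
  -- the integrand families
  set F : ℝ → ℝ → ℝ := fun u y =>
    Ω y * ((u - y) / ((u - y) ^ 2 + t ^ 2) + y / (y ^ 2 + 1)) with hF
  set F' : ℝ → ℝ → ℝ := fun u y =>
    Ω y * ((t ^ 2 - (u - y) ^ 2) / (((u - y) ^ 2 + t ^ 2) ^ 2)) with hF'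
  have hFmeas : ∀ u : ℝ, AEStronglyMeasurable (F u) volume := by
    intro u
    apply hΩm.mul
    apply Continuous.aestronglyMeasurable
    apply Continuous.add
    · exact Continuous.div (by fun_prop) (by fun_prop) (fun y => by positivity)
    · exact Continuous.div (by fun_prop) (by fun_prop) (fun y => by positivity)
  have hFint : Integrable (F x) := by
    apply Integrable.mono' (hint'.const_mul ((x ^ 2 + 4 * t * |x| + 1 + t ^ 2) / (2 * t)))
      (hFmeas x)
    refine Filter.Eventually.of_forall fun y => ?_
    rw [hF]
    simp only [Real.norm_eq_abs, abs_mul]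
    calc |Ω y| * |(x - y) / ((x - y) ^ 2 + t ^ 2) + y / (y ^ 2 + 1)|
        ≤ |Ω y| * (((x ^ 2 + 4 * t * |x| + 1 + t ^ 2) / (2 * t)) * (1 / (1 + y ^ 2))) :=
          mul_le_mul_of_nonneg_left (kbound ht x y) (abs_nonneg _)
      _ = (x ^ 2 + 4 * t * |x| + 1 + t ^ 2) / (2 * t) * (|Ω y| / (1 + y ^ 2)) := by ring
  have hF'meas : AEStronglyMeasurable (F' x) volume := by
    apply hΩm.mul
    exact (Continuous.div (by fun_prop) (by fun_prop)
      (fun y => by positivity)).aestronglyMeasurable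
  set Cb : ℝ := (1 + 2 * (|x| + 1) ^ 2) / t ^ 2 + 2 with hCb
  have h_bound : ∀ᵐ y : ℝ, ∀ u ∈ Metric.ball x 1, ‖F' u y‖ ≤ Cb * (|Ω y| / (1 + y ^ 2)) := by
    refine Filter.Eventually.of_forall fun y u hu => ?_
    have hu1 : |u| ≤ |x| + 1 := by
      have := mem_ball_iff_norm.mp hu
      rw [Real.norm_eq_abs] at this
      calc |u| = |x + (u - x)| := by ring_nf
        _ ≤ |x| + |u - x| := abs_add_le _ _
        _ ≤ |x| + 1 := by linarith
    rw [hF']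
    simp only [Real.norm_eq_abs, abs_mul]
    have h1 : |(t ^ 2 - (u - y) ^ 2) / (((u - y) ^ 2 + t ^ 2) ^ 2)|
        ≤ Cb * (1 / (1 + y ^ 2)) := by
      refine (dbound ht u y).trans ?_
      apply mul_le_mul_of_nonneg_right _ (by positivity)
      rw [hCb]
      have : u ^ 2 ≤ (|x| + 1) ^ 2 := by
        rw [← sq_abs u]
        apply pow_le_pow_left₀ (abs_nonneg u) hu1
      apply add_le_add_left
      apply div_le_div_of_nonneg_right _ (by positivity)
      · linarith
    calc |Ω y| * |(t ^ 2 - (u - y) ^ 2) / (((u - y) ^ 2 + t ^ 2) ^ 2)|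
        ≤ |Ω y| * (Cb * (1 / (1 + y ^ 2))) :=
          mul_le_mul_of_nonneg_left h1 (abs_nonneg _)
      _ = Cb * (|Ω y| / (1 + y ^ 2)) := by ring
  have h_diff : ∀ᵐ y : ℝ, ∀ u ∈ Metric.ball x 1, HasDerivAt (fun v => F v y) (F' u y) u := by
    refine Filter.Eventually.of_forall fun y u _ => ?_
    have hshift : HasDerivAt (fun v : ℝ => v - y) 1 u := (hasDerivAt_id u).sub_const y
    have hk := (kernel_hasDeriv ht (u - y)).comp u hshift
    rw [mul_one] at hk
    have := ((hk.add_const (y / (y ^ 2 + 1))).const_mul (Ω y))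
    simpa [hF, hF', Function.comp] using this
  have hmain := hasDerivAt_integral_of_dominated_loc_of_deriv_le (Metric.ball_mem_nhds x one_pos)
    (Filter.Eventually.of_forall hFmeas) hFint hF'meas h_bound
    (hint'.const_mul Cb) h_diff
  obtain ⟨hF'int, hderiv⟩ := hmain
  -- rewrite the derivative integral
  have hker_int : Integrable (fun y : ℝ => (Ω (x - y) - Ω x) *
      ((t ^ 2 - y ^ 2) / (y ^ 2 + t ^ 2) ^ 2)) := by
    apply Integrable.mono' ((intR_rpow_div hα0 hα1 ht).const_mul K₀)
    · apply AEStronglyMeasurable.mul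
      · exact (hΩm.comp_measurePreserving (Measure.measurePreserving_sub_left volume x)).sub
          aestronglyMeasurable_const
      · exact (Continuous.div (by fun_prop) (by fun_prop)
          (fun y => by positivity)).aestronglyMeasurable
    · refine Filter.Eventually.of_forall fun y => ?_
      rw [Real.norm_eq_abs, abs_mul]
      calc |Ω (x - y) - Ω x| * |(t ^ 2 - y ^ 2) / (y ^ 2 + t ^ 2) ^ 2|
          ≤ (K₀ * |y| ^ α) * (1 / (y ^ 2 + t ^ 2)) :=
            mul_le_mul (hHol y) (kernel_le ht y) (abs_nonneg _) (by positivity)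
        _ = K₀ * (|y| ^ α / (y ^ 2 + t ^ 2)) := by ring
  have hconst_int : Integrable (fun y : ℝ => Ω x * ((t ^ 2 - y ^ 2) / (y ^ 2 + t ^ 2) ^ 2)) :=
    (kernel_integrable ht).const_mul (Ω x)
  have hshift_int : Integrable (fun y : ℝ => Ω (x - y) * ((t ^ 2 - y ^ 2) / (y ^ 2 + t ^ 2) ^ 2)) := by
    refine (hker_int.add hconst_int).congr (Filter.Eventually.of_forall fun y => ?_)
    simp only [Pi.add_apply]
    ring
  have hintegral_eq : ∫ y : ℝ, (Ω (x - y) - Ω x) * (t ^ 2 - y ^ 2) / (y ^ 2 + t ^ 2) ^ 2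
      = ∫ y : ℝ, F' x y := by
    have e0 : ∫ y : ℝ, (Ω (x - y) - Ω x) * (t ^ 2 - y ^ 2) / (y ^ 2 + t ^ 2) ^ 2
        = ∫ y : ℝ, (Ω (x - y) - Ω x) * ((t ^ 2 - y ^ 2) / (y ^ 2 + t ^ 2) ^ 2) := by
      congr 1
      funext y
      rw [mul_div_assoc]
    have e1 : ∫ y : ℝ, (Ω (x - y) - Ω x) * ((t ^ 2 - y ^ 2) / (y ^ 2 + t ^ 2) ^ 2)
        = (∫ y : ℝ, Ω (x - y) * ((t ^ 2 - y ^ 2) / (y ^ 2 + t ^ 2) ^ 2))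
          - ∫ y : ℝ, Ω x * ((t ^ 2 - y ^ 2) / (y ^ 2 + t ^ 2) ^ 2) := by
      rw [← integral_sub hshift_int hconst_int]
      congr 1
      funext y
      ring
    have e2 : ∫ y : ℝ, Ω x * ((t ^ 2 - y ^ 2) / (y ^ 2 + t ^ 2) ^ 2) = 0 := by
      rw [MeasureTheory.integral_const_mul, kernel_integral_zero ht, mul_zero]
    have e3 : ∫ y : ℝ, Ω (x - y) * ((t ^ 2 - y ^ 2) / (y ^ 2 + t ^ 2) ^ 2)
        = ∫ y : ℝ, F' x y := by
      have := integral_sub_left_eq_self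
        (fun z : ℝ => Ω z * ((t ^ 2 - (x - z) ^ 2) / (((x - z) ^ 2 + t ^ 2) ^ 2))) volume x
      rw [← this]
      congr 1
      funext y
      rw [show x - (x - y) = y by ring]
    rw [e0, e1, e2, sub_zero, e3]
  constructor
  · rw [← hintegral_eq] at hderiv
    exact hderiv.const_mul (1 / π)
  · have h2 : |∫ y : ℝ, (Ω (x - y) - Ω x) * (t ^ 2 - y ^ 2) / (y ^ 2 + t ^ 2) ^ 2|
        ≤ K₀ * (π * t ^ (α - 1) / Real.cos (π * α / 2)) := by
      have hb : ‖∫ y : ℝ, (Ω (x - y) - Ω x) * (t ^ 2 - y ^ 2) / (y ^ 2 + t ^ 2) ^ 2‖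
          ≤ ∫ y : ℝ, K₀ * (|y| ^ α / (y ^ 2 + t ^ 2)) := by
        apply norm_integral_le_of_norm_le ((intR_rpow_div hα0 hα1 ht).const_mul K₀)
        refine Filter.Eventually.of_forall fun y => ?_
        rw [Real.norm_eq_abs, mul_div_assoc, abs_mul]
        calc |Ω (x - y) - Ω x| * |(t ^ 2 - y ^ 2) / (y ^ 2 + t ^ 2) ^ 2|
            ≤ (K₀ * |y| ^ α) * (1 / (y ^ 2 + t ^ 2)) :=
              mul_le_mul (hHol y) (kernel_le ht y) (abs_nonneg _) (by positivity)
          _ = K₀ * (|y| ^ α / (y ^ 2 + t ^ 2)) := by ring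
      rw [MeasureTheory.integral_const_mul, int_val hα0 hα1 ht, Real.norm_eq_abs] at hb
      exact hb
    have hπ : (0:ℝ) < 1 / π := by positivity
    rw [abs_mul, abs_of_pos hπ]
    calc (1 / π) * |∫ y : ℝ, (Ω (x - y) - Ω x) * (t ^ 2 - y ^ 2) / (y ^ 2 + t ^ 2) ^ 2|
        ≤ (1 / π) * (K₀ * (π * t ^ (α - 1) / Real.cos (π * α / 2))) :=
          mul_le_mul_of_nonneg_left h2 hπ.le
      _ = K₀ * t ^ (α - 1) / Real.cos (π * α / 2) := by
          rw [show K₀ * (π * t ^ (α - 1) / Real.cos (π * α / 2))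
              = π * (K₀ * t ^ (α - 1) / Real.cos (π * α / 2)) by ring, ← mul_assoc,
            one_div, inv_mul_cancel₀ Real.pi_ne_zero, one_mul]
end

section
/- Let Ω(x) = √(2πx) for x > 0 and Ω(x) = 0 for x ≤ 0. Then for every t > 0 and every x ∈ ℝ, the Poisson transform of Ω is given explicitly by P_t Ω(x) = (1/π) ∫₀^∞ t √(2πy) / (t² + (x−y)²) dy = √(π(√(x²+t²) + x)). -/
open MeasureTheory Real Set Filter Topology

private lemma sqrt_tendsto_atTop' : Tendsto Real.sqrt atTop atTop := by
  apply tendsto_atTop_atTop.2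
  intro c
  refine ⟨max 0 (c ^ 2), fun u hu => ?_⟩
  rcases le_total c 0 with hc | hc
  · exact hc.trans (Real.sqrt_nonneg u)
  · calc c = Real.sqrt (c ^ 2) := by rw [Real.sqrt_sq hc]
      _ ≤ Real.sqrt u := Real.sqrt_le_sqrt ((le_max_right _ _).trans hu)

private lemma key_integral (t x : ℝ) (ht : 0 < t) :
    (∫ y in Ioi (0 : ℝ), t * Real.sqrt (2 * π * y) / (t ^ 2 + (x - y) ^ 2))
      = π * Real.sqrt (π * (Real.sqrt (x ^ 2 + t ^ 2) + x)) := by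
  set r : ℝ := Real.sqrt (x ^ 2 + t ^ 2) with hr_def
  set a : ℝ := Real.sqrt ((r + x) / 2) with ha_def
  set b : ℝ := Real.sqrt ((r - x) / 2) with hb_def
  have hr2 : r ^ 2 = x ^ 2 + t ^ 2 := Real.sq_sqrt (by positivity)
  have hxr : |x| < r := by
    rw [hr_def, ← Real.sqrt_sq_eq_abs]
    exact Real.sqrt_lt_sqrt (sq_nonneg x) (by nlinarith)
  have hxr1 : -x < r := by cases abs_lt.1 hxr; linarith
  have hxr2 : x < r := by cases abs_lt.1 hxr; linarith
  have ha2 : a ^ 2 = (r + x) / 2 := Real.sq_sqrt (by linarith)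
  have hb2 : b ^ 2 = (r - x) / 2 := Real.sq_sqrt (by linarith)
  have ha : 0 < a := Real.sqrt_pos.2 (by linarith)
  have hb : 0 < b := Real.sqrt_pos.2 (by linarith)
  have habr : a ^ 2 + b ^ 2 = r := by rw [ha2, hb2]; ring
  have hax : a ^ 2 - b ^ 2 = x := by rw [ha2, hb2]; ring
  have h2ab : 2 * a * b = t := by
    have h : (2 * a * b) ^ 2 = t ^ 2 := by nlinarith
    nlinarith [mul_pos (mul_pos (by norm_num : (0:ℝ) < 2) ha) hb]
  have hA : ∀ u : ℝ, 0 < (u - a) ^ 2 + b ^ 2 := fun u =>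
    add_pos_of_nonneg_of_pos (sq_nonneg _) (pow_pos hb 2)
  have hB : ∀ u : ℝ, 0 < (u + a) ^ 2 + b ^ 2 := fun u =>
    add_pos_of_nonneg_of_pos (sq_nonneg _) (pow_pos hb 2)
  set F : ℝ → ℝ := fun u => Real.sqrt (2 * π) * (t / (2 * a)) *
      ((1 / 2) * Real.log ((u - a) ^ 2 + b ^ 2) - (1 / 2) * Real.log ((u + a) ^ 2 + b ^ 2)
        + (a / b) * Real.arctan ((u - a) / b) + (a / b) * Real.arctan ((u + a) / b)) with hF_def
  set G : ℝ → ℝ := fun y => F (Real.sqrt y) with hG_def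
  -- continuity
  have hFc : Continuous F := by
    have hlog : ∀ c : ℝ, Continuous fun u : ℝ => Real.log ((u - c) ^ 2 + b ^ 2) := by
      intro c
      apply Continuous.log
      · exact ((continuous_id.sub continuous_const).pow 2).add continuous_const
      · intro u
        exact ne_of_gt (add_pos_of_nonneg_of_pos (sq_nonneg _) (pow_pos hb 2))
    have hat : ∀ c : ℝ, Continuous fun u : ℝ => Real.arctan ((u + c) / b) :=
      fun c => Real.continuous_arctan.comp ((continuous_id.add continuous_const).div_const b)
    have h1 := hlog a
    have h2 : Continuous fun u : ℝ => Real.log ((u + a) ^ 2 + b ^ 2) := by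
      simpa [sub_neg_eq_add] using hlog (-a)
    have h3 : Continuous fun u : ℝ => Real.arctan ((u - a) / b) := by
      simpa [sub_eq_add_neg] using hat (-a)
    have h4 := hat a
    exact continuous_const.mul
      ((((continuous_const.mul h1).sub (continuous_const.mul h2)).add
        (continuous_const.mul h3)).add (continuous_const.mul h4))
  have hGc : Continuous G := hFc.comp Real.continuous_sqrt
  -- derivative
  have hderiv : ∀ y ∈ Ioi (0 : ℝ),
      HasDerivAt G (t * Real.sqrt (2 * π * y) / (t ^ 2 + (x - y) ^ 2)) y := by
    intro y hy
    have hy' : (0 : ℝ) < y := hy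
    set u : ℝ := Real.sqrt y with hu_def
    have hu : 0 < u := Real.sqrt_pos.2 hy'
    have hu2 : u ^ 2 = y := Real.sq_sqrt hy'.le
    have hd1 : HasDerivAt (fun v : ℝ => (v - a) ^ 2 + b ^ 2) (2 * (u - a)) u := by
      simpa using (((hasDerivAt_id u).sub_const a).pow 2).add_const (b ^ 2)
    have hd2 : HasDerivAt (fun v : ℝ => (v + a) ^ 2 + b ^ 2) (2 * (u + a)) u := by
      simpa using (((hasDerivAt_id u).add_const a).pow 2).add_const (b ^ 2)
    have hl1 : HasDerivAt (fun v : ℝ => Real.log ((v - a) ^ 2 + b ^ 2))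
        (2 * (u - a) / ((u - a) ^ 2 + b ^ 2)) u := hd1.log (ne_of_gt (hA u))
    have hl2 : HasDerivAt (fun v : ℝ => Real.log ((v + a) ^ 2 + b ^ 2))
        (2 * (u + a) / ((u + a) ^ 2 + b ^ 2)) u := hd2.log (ne_of_gt (hB u))
    have hi1 : HasDerivAt (fun v : ℝ => (v - a) / b) (1 / b) u := by
      simpa using ((hasDerivAt_id u).sub_const a).div_const b
    have hi2 : HasDerivAt (fun v : ℝ => (v + a) / b) (1 / b) u := by
      simpa using ((hasDerivAt_id u).add_const a).div_const b
    have ht1 : HasDerivAt (fun v : ℝ => Real.arctan ((v - a) / b))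
        (1 / (1 + ((u - a) / b) ^ 2) * (1 / b)) u :=
      hi1.arctan
    have ht2 : HasDerivAt (fun v : ℝ => Real.arctan ((v + a) / b))
        (1 / (1 + ((u + a) / b) ^ 2) * (1 / b)) u :=
      hi2.arctan
    have hF' : HasDerivAt F
        (Real.sqrt (2 * π) * (t / (2 * a)) *
          ((1 / 2) * (2 * (u - a) / ((u - a) ^ 2 + b ^ 2))
            - (1 / 2) * (2 * (u + a) / ((u + a) ^ 2 + b ^ 2))
            + (a / b) * (1 / (1 + ((u - a) / b) ^ 2) * (1 / b))
            + (a / b) * (1 / (1 + ((u + a) / b) ^ 2) * (1 / b)))) u :=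
      ((((hl1.const_mul _).sub (hl2.const_mul _)).add (ht1.const_mul _)).add
        (ht2.const_mul _)).const_mul _
    have hs : HasDerivAt Real.sqrt (1 / (2 * Real.sqrt y)) y :=
      Real.hasDerivAt_sqrt (ne_of_gt hy')
    have hG' := hF'.comp y hs
    refine hG'.congr_deriv ?_
    symm
    rw [← hu_def]
    have hD : ((u - a) ^ 2 + b ^ 2) * ((u + a) ^ 2 + b ^ 2) = t ^ 2 + (x - y) ^ 2 := by
      linear_combination (-2 * u ^ 2) * hax + (a ^ 2 + b ^ 2 + r) * habr + hr2
        + (u ^ 2 + y - 2 * x) * hu2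
    have hsq : Real.sqrt (2 * π * y) = Real.sqrt (2 * π) * u := by
      rw [hu_def, Real.sqrt_mul (by positivity)]
    have e1 : 1 + ((u - a) / b) ^ 2 = ((u - a) ^ 2 + b ^ 2) / b ^ 2 := by
      field_simp; ring
    have e2 : 1 + ((u + a) / b) ^ 2 = ((u + a) ^ 2 + b ^ 2) / b ^ 2 := by
      field_simp; ring
    rw [hsq, e1, e2, ← hD]
    set A : ℝ := (u - a) ^ 2 + b ^ 2 with hA_def
    set B : ℝ := (u + a) ^ 2 + b ^ 2 with hB_def
    have hApos : 0 < A := hA u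
    have hBeq : B = A + 4 * a * u := by rw [hA_def, hB_def]; ring
    rw [hBeq]
    have hu0 : u ≠ 0 := ne_of_gt hu
    have ha0 : a ≠ 0 := ne_of_gt ha
    have hb0 : b ≠ 0 := ne_of_gt hb
    have hA0 : A ≠ 0 := ne_of_gt hApos
    have hAB0 : A + 4 * a * u ≠ 0 := by rw [← hBeq]; exact ne_of_gt (hB u)
    clear_value A B u a b r
    clear hG' hF' ht1 ht2 hl1 hl2 hi1 hi2 hd1 hd2 hs hD hsq e1 e2 hBeq hA_def hB_def
      hu_def hu2 hy hy' hGc hFc hG_def G hF_def F hb_def ha_def hr_def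
    field_simp [hu0, ha0, hb0, hA0, hAB0]
    ring
  -- nonnegativity of the integrand
  have hnonneg : ∀ y ∈ Ioi (0 : ℝ),
      0 ≤ t * Real.sqrt (2 * π * y) / (t ^ 2 + (x - y) ^ 2) := by
    intro y _
    exact div_nonneg (mul_nonneg ht.le (Real.sqrt_nonneg _))
      (add_nonneg (sq_nonneg t) (sq_nonneg _))
  -- limit at infinity
  have hratio : Tendsto (fun u : ℝ => ((u - a) ^ 2 + b ^ 2) / ((u + a) ^ 2 + b ^ 2))
      atTop (𝓝 1) := by
    have h1 : Tendsto (fun u : ℝ => a / u) atTop (𝓝 0) :=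
      tendsto_const_nhds.div_atTop tendsto_id
    have h2 : Tendsto (fun u : ℝ => b / u) atTop (𝓝 0) :=
      tendsto_const_nhds.div_atTop tendsto_id
    have hnum : Tendsto (fun u : ℝ => (1 - a / u) ^ 2 + (b / u) ^ 2) atTop
        (𝓝 (((1 : ℝ) - 0) ^ 2 + 0 ^ 2)) := ((tendsto_const_nhds.sub h1).pow 2).add (h2.pow 2)
    have hden : Tendsto (fun u : ℝ => (1 + a / u) ^ 2 + (b / u) ^ 2) atTop
        (𝓝 (((1 : ℝ) + 0) ^ 2 + 0 ^ 2)) := ((tendsto_const_nhds.add h1).pow 2).add (h2.pow 2)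
    have hq := hnum.div hden (by norm_num)
    have hq' : Tendsto (fun u : ℝ => ((1 - a / u) ^ 2 + (b / u) ^ 2)
        / ((1 + a / u) ^ 2 + (b / u) ^ 2)) atTop (𝓝 1) := by
      convert hq using 2 <;> norm_num
    refine Tendsto.congr' ?_ hq'
    filter_upwards [eventually_gt_atTop (0 : ℝ)] with u hu
    have hu0 : u ≠ 0 := ne_of_gt hu
    have hd1 : (u + a) ^ 2 + b ^ 2 ≠ 0 := ne_of_gt (hB u)
    field_simp
  have hlogt : Tendsto (fun u : ℝ => (1 / 2) * Real.log ((u - a) ^ 2 + b ^ 2)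
      - (1 / 2) * Real.log ((u + a) ^ 2 + b ^ 2)) atTop (𝓝 0) := by
    have hc : Tendsto Real.log (𝓝 1) (𝓝 0) := by
      have := (Real.continuousAt_log one_ne_zero).tendsto
      rwa [Real.log_one] at this
    have h3 : Tendsto (fun u : ℝ =>
        (1 / 2) * Real.log (((u - a) ^ 2 + b ^ 2) / ((u + a) ^ 2 + b ^ 2))) atTop
        (𝓝 ((1 / 2) * 0)) := (hc.comp hratio).const_mul (1 / 2)
    rw [mul_zero] at h3
    refine h3.congr fun u => ?_
    rw [Real.log_div (ne_of_gt (hA u)) (ne_of_gt (hB u))]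
    ring
  have harct : ∀ c : ℝ, Tendsto (fun u : ℝ => Real.arctan ((u + c) / b)) atTop (𝓝 (π / 2)) := by
    intro c
    have hin : Tendsto (fun u : ℝ => (u + c) / b) atTop atTop :=
      (tendsto_atTop_add_const_right atTop c tendsto_id).atTop_div_const hb
    exact (tendsto_nhds_of_tendsto_nhdsWithin Real.tendsto_arctan_atTop).comp hin
  have hat1 : Tendsto (fun u : ℝ => Real.arctan ((u - a) / b)) atTop (𝓝 (π / 2)) := by
    have := harct (-a)
    refine this.congr fun u => ?_
    rw [sub_eq_add_neg]
  have hat2 : Tendsto (fun u : ℝ => Real.arctan ((u + a) / b)) atTop (𝓝 (π / 2)) := harct a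
  have hFt : Tendsto F atTop (𝓝 (Real.sqrt (2 * π) * (t / (2 * a)) *
      (0 + (a / b) * (π / 2) + (a / b) * (π / 2)))) :=
    ((hlogt.add (hat1.const_mul (a / b))).add (hat2.const_mul (a / b))).const_mul _
  have hGt : Tendsto G atTop (𝓝 (Real.sqrt (2 * π) * (t / (2 * a)) *
      (0 + (a / b) * (π / 2) + (a / b) * (π / 2)))) := hFt.comp sqrt_tendsto_atTop'
  have hint := integral_Ioi_of_hasDerivAt_of_nonneg hGc.continuousWithinAt hderiv hnonneg hGt
  have hG0 : G 0 = 0 := by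
    simp only [hG_def, hF_def, Real.sqrt_zero, zero_sub, zero_add, neg_div,
      Real.arctan_neg, neg_sq]
    ring
  rw [hint, hG0, sub_zero]
  -- final algebraic identity
  have hsa : Real.sqrt (2 * π) * a = Real.sqrt (π * (r + x)) := by
    rw [ha_def, ← Real.sqrt_mul (by positivity)]
    congr 1
    ring
  rw [← hsa]
  have ha0 : a ≠ 0 := ne_of_gt ha
  have hb0 : b ≠ 0 := ne_of_gt hb
  field_simp
  linear_combination (-(2 * π * a)) * h2ab

/-- Explicit Poisson extension of `Ω(x) = √(2πx)·1_{x>0}`: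
`P_tΩ(x) = (1/π)∫₀^∞ t√(2πy)/(t²+(x-y)²) dy = √(π(√(x²+t²)+x))`. -/
theorem poisson_of_sqrt_weight
    (Ω : ℝ → ℝ) (hΩ : ∀ y, Ω y = if 0 < y then Real.sqrt (2 * π * y) else 0)
    (t : ℝ) (ht : 0 < t) (x : ℝ) :
    (∫ y : ℝ, t * Ω y / (π * (t ^ 2 + (x - y) ^ 2)))
        = (1 / π) * ∫ y in Ioi (0 : ℝ), t * Real.sqrt (2 * π * y) / (t ^ 2 + (x - y) ^ 2) ∧
    (∫ y : ℝ, t * Ω y / (π * (t ^ 2 + (x - y) ^ 2)))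
        = Real.sqrt (π * (Real.sqrt (x ^ 2 + t ^ 2) + x)) := by
  have h1 : (∫ y : ℝ, t * Ω y / (π * (t ^ 2 + (x - y) ^ 2)))
      = (1 / π) * ∫ y in Ioi (0 : ℝ), t * Real.sqrt (2 * π * y) / (t ^ 2 + (x - y) ^ 2) := by
    have heq : ∀ y : ℝ, t * Ω y / (π * (t ^ 2 + (x - y) ^ 2))
        = Set.indicator (Ioi (0 : ℝ))
            (fun y => (1 / π) * (t * Real.sqrt (2 * π * y) / (t ^ 2 + (x - y) ^ 2))) y := by
      intro y
      rw [hΩ]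
      by_cases hy : 0 < y
      · rw [if_pos hy, Set.indicator_of_mem (mem_Ioi.2 hy)]
        have hD0 : t ^ 2 + (x - y) ^ 2 ≠ 0 := by positivity
        field_simp
      · rw [if_neg hy, Set.indicator_of_notMem (by simpa using hy)]
        simp
    simp_rw [heq]
    rw [integral_indicator measurableSet_Ioi, integral_const_mul]
  refine ⟨h1, ?_⟩
  rw [h1, key_integral t x ht]
  rw [← mul_assoc, one_div, inv_mul_cancel₀ (ne_of_gt Real.pi_pos), one_mul]
end

section
/- Let Ω(x) = √(2πx) for x > 0 and Ω(x) = 0 for x ≤ 0. Then for every t > 0 and every x ∈ ℝ, the modified conjugate Poisson transform of Ω is given explicitly by Q̃_t Ω(x) = (1/π) ∫₀^∞ √(2πy) ((x−y)/((x−y)²+t²) + y/(y²+1)) dy = −√π + √(π(√(x²+t²) − x)). -/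
open MeasureTheory Real Set Filter

noncomputable def Fab (a b : ℝ) (u : ℝ) : ℝ :=
  -b*(Real.arctan ((u-a)/b) + Real.arctan ((u+a)/b))
    + a/2*(Real.log ((u-a)^2+b^2) - Real.log ((u+a)^2+b^2))

noncomputable def fpq (p q : ℝ) (u : ℝ) : ℝ :=
  (2*p*u^2 - 2*(p^2+q^2))/((u^2-p)^2 + q^2)

lemma Fab_hasDerivAt (a b : ℝ) (ha : 0 < a) (hb : 0 < b) (u : ℝ) :
    HasDerivAt (Fab a b) (fpq (a^2-b^2) (2*a*b) u) u := by
  have hb' : b ≠ 0 := hb.ne'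
  have h1 : (0:ℝ) < (u-a)^2 + b^2 := by positivity
  have h2 : (0:ℝ) < (u+a)^2 + b^2 := by positivity
  have d1 : HasDerivAt (fun u : ℝ => Real.arctan ((u-a)/b))
      ((1 / (1 + ((u-a)/b)^2)) * (1/b)) u := by
    have : HasDerivAt (fun u : ℝ => (u-a)/b) (1/b) u := by
      simpa using ((hasDerivAt_id u).sub_const a).div_const b
    exact (Real.hasDerivAt_arctan ((u-a)/b)).comp u this
  have d2 : HasDerivAt (fun u : ℝ => Real.arctan ((u+a)/b))
      ((1 / (1 + ((u+a)/b)^2)) * (1/b)) u := by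
    have : HasDerivAt (fun u : ℝ => (u+a)/b) (1/b) u := by
      simpa using ((hasDerivAt_id u).add_const a).div_const b
    exact (Real.hasDerivAt_arctan ((u+a)/b)).comp u this
  have d3 : HasDerivAt (fun u : ℝ => Real.log ((u-a)^2+b^2))
      ((2*(u-a))/((u-a)^2+b^2)) u := by
    have h : HasDerivAt (fun u : ℝ => (u-a)^2+b^2) (2*(u-a)) u := by
      simpa using (((hasDerivAt_id u).sub_const a).pow 2).add_const (b^2)
    simpa using h.log h1.ne'
  have d4 : HasDerivAt (fun u : ℝ => Real.log ((u+a)^2+b^2))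
      ((2*(u+a))/((u+a)^2+b^2)) u := by
    have h : HasDerivAt (fun u : ℝ => (u+a)^2+b^2) (2*(u+a)) u := by
      simpa using (((hasDerivAt_id u).add_const a).pow 2).add_const (b^2)
    simpa using h.log h2.ne'
  have := (((d1.add d2).const_mul (-b)).add (((d3.sub d4)).const_mul (a/2)))
  refine this.congr_deriv ?_
  symm
  unfold fpq
  have e1 : 1 + ((u-a)/b)^2 = ((u-a)^2+b^2)/b^2 := by field_simp; ring
  have e2 : 1 + ((u+a)/b)^2 = ((u+a)^2+b^2)/b^2 := by field_simp; ring
  rw [e1, e2]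
  rw [div_eq_iff (by positivity : ((u^2-(a^2-b^2))^2 + (2*a*b)^2) ≠ 0)]
  field_simp
  ring

lemma Fab_zero (a b : ℝ) : Fab a b 0 = 0 := by
  unfold Fab
  have : (0-a)^2 = (0+a)^2 := by ring
  rw [this]
  have : (0-a)/b = -((0+a)/b) := by ring
  rw [this, Real.arctan_neg]
  ring

lemma Fab_tendsto (a b : ℝ) (hb : 0 < b) :
    Tendsto (Fab a b) atTop (nhds (-(π*b))) := by
  have harc : ∀ c : ℝ, Tendsto (fun u : ℝ => Real.arctan ((u-c)/b)) atTop (nhds (π/2)) := by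
    intro c
    have h1 : Tendsto (fun u : ℝ => (u-c)/b) atTop atTop :=
      (tendsto_atTop_add_const_right _ (-c) tendsto_id).atTop_div_const hb
    exact (Real.tendsto_arctan_atTop.mono_right nhdsWithin_le_nhds).comp h1
  have hlog : Tendsto (fun u : ℝ => Real.log ((u-a)^2+b^2) - Real.log ((u+a)^2+b^2))
      atTop (nhds 0) := by
    have hratio : Tendsto (fun u : ℝ => ((u-a)^2+b^2)/((u+a)^2+b^2)) atTop (nhds 1) := by
      have h0 : Tendsto (fun u : ℝ => (1:ℝ)/u) atTop (nhds 0) :=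
        tendsto_const_nhds.div_atTop tendsto_id
      have hnum : Tendsto (fun u : ℝ => (1-a*(1/u))^2+(b*(1/u))^2) atTop (nhds 1) := by
        have := (((tendsto_const_nhds (x := (1:ℝ))).sub ((h0.const_mul a))).pow 2).add
            ((h0.const_mul b).pow 2)
        simpa using this
      have hden : Tendsto (fun u : ℝ => (1+a*(1/u))^2+(b*(1/u))^2) atTop (nhds 1) := by
        have := (((tendsto_const_nhds (x := (1:ℝ))).add ((h0.const_mul a))).pow 2).add
            ((h0.const_mul b).pow 2)
        simpa using this
      have h : Tendsto (fun u : ℝ => ((1-a*(1/u))^2+(b*(1/u))^2)/((1+a*(1/u))^2+(b*(1/u))^2))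
          atTop (nhds 1) := by
        simpa [Pi.div_def] using hnum.div hden one_ne_zero
      refine h.congr' ?_
      filter_upwards [eventually_gt_atTop (0:ℝ)] with u hu
      have hu' : u ≠ 0 := hu.ne'
      rw [div_eq_div_iff (by positivity) (by positivity)]
      field_simp
    have := ((Real.continuousAt_log (by norm_num : (1:ℝ) ≠ 0)).tendsto.comp hratio)
    simp only [Real.log_one] at this
    refine this.congr ?_
    intro u
    simp only [Function.comp]
    rw [Real.log_div (by positivity) (by positivity)]
  have := ((((harc a).add (harc (-a))).const_mul (-b)).add (hlog.const_mul (a/2)))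
  simp only [sub_neg_eq_add] at this
  have h2 : (-b)*(π/2+π/2) + a/2*0 = -(π*b) := by ring
  rw [h2] at this
  refine this.congr ?_
  intro u
  unfold Fab
  ring_nf

lemma fpq_cont (p q : ℝ) (hq : 0 < q) : Continuous (fpq p q) := by
  unfold fpq
  exact Continuous.div (by continuity) (by continuity)
    (fun u => by positivity)

lemma fpq_integrable (p q : ℝ) (hq : 0 < q) : Integrable (fpq p q) := by
  set C1 : ℝ := 2*|p| + 2*(p^2+q^2) with hC1
  set K : ℝ := 2*(1+|p|)^2/q^2 + 2 with hK
  have hC1nn : 0 ≤ C1 := by positivity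
  have hKnn : 0 ≤ K := by positivity
  refine Integrable.mono' ((integrable_inv_one_add_sq).const_mul (C1*K))
    ((fpq_cont p q hq).aestronglyMeasurable) (ae_of_all _ fun u => ?_)
  have hD : (0:ℝ) < (u^2-p)^2 + q^2 := by positivity
  have h1u : (0:ℝ) < 1 + u^2 := by positivity
  have hN : |2*p*u^2 - 2*(p^2+q^2)| ≤ C1*(1+u^2) := by
    rw [hC1]
    have h := abs_sub (2*p*u^2) (2*(p^2+q^2))
    have h2 : |2*p*u^2| = 2 * |p| * u^2 := by
      rw [abs_mul, abs_mul]; simp [abs_of_nonneg (sq_nonneg u)]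
    nlinarith [abs_nonneg p, sq_nonneg u, abs_nonneg (2*(p^2+q^2)),
      abs_of_nonneg (by positivity : (0:ℝ) ≤ 2*(p^2+q^2))]
  have hD2 : (1+u^2)^2 ≤ K * ((u^2-p)^2 + q^2) := by
    have key : (1+u^2)^2 ≤ 2*(1+|p|)^2 + 2*(u^2-p)^2 := by
      have h1 : 1+u^2 ≤ (1+|p|) + |u^2-p| := by
        have := le_abs_self (u^2-p); have := le_abs_self p; linarith
      have h2 : (1+u^2)^2 ≤ ((1+|p|)+|u^2-p|)^2 := pow_le_pow_left₀ h1u.le h1 2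
      nlinarith [sq_nonneg ((1+|p|) - |u^2-p|), sq_abs (u^2-p)]
    have hKq : 0 ≤ 2*(1+|p|)^2/q^2 := by positivity
    have expand : K * ((u^2-p)^2+q^2)
        = (2*(1+|p|)^2/q^2)*(u^2-p)^2 + 2*(1+|p|)^2 + 2*((u^2-p)^2+q^2) := by
      rw [hK]; field_simp
    rw [expand]
    nlinarith [mul_nonneg hKq (sq_nonneg (u^2-p)), sq_nonneg q, sq_nonneg (u^2-p)]
  have hbound : |fpq p q u| ≤ C1*K * (1+u^2)⁻¹ := by
    have e : C1*K * (1+u^2)⁻¹ = C1*K/(1+u^2) := by rw [div_eq_mul_inv]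
    rw [e]
    unfold fpq
    rw [abs_div, abs_of_pos hD, div_le_div_iff₀ hD h1u]
    calc |2*p*u^2 - 2*(p^2+q^2)| * (1+u^2) ≤ (C1*(1+u^2)) * (1+u^2) :=
          mul_le_mul_of_nonneg_right hN h1u.le
      _ ≤ C1*K*((u^2-p)^2+q^2) := by nlinarith [mul_le_mul_of_nonneg_left hD2 hC1nn]
  simpa [Real.norm_eq_abs] using hbound

lemma core_integral (a b : ℝ) (ha : 0 < a) (hb : 0 < b) :
    ∫ u in Ioi (0:ℝ), fpq (a^2-b^2) (2*a*b) u = -(π*b) := by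
  have h := integral_Ioi_of_hasDerivAt_of_tendsto
    ((Fab_hasDerivAt a b ha hb 0).continuousAt.continuousWithinAt)
    (fun u _ => Fab_hasDerivAt a b ha hb u)
    ((fpq_integrable _ _ (by positivity)).integrableOn)
    (Fab_tendsto a b hb)
  rw [h, Fab_zero]; ring

lemma core_pq (p q : ℝ) (hq : 0 < q) :
    ∫ u in Ioi (0:ℝ), fpq p q u
      = -(π * Real.sqrt ((Real.sqrt (p^2+q^2) - p)/2)) := by
  set r : ℝ := Real.sqrt (p^2+q^2) with hr
  have hr2 : r^2 = p^2+q^2 := Real.sq_sqrt (by positivity)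
  have hrabs : |p| < r := by
    have h1 : |p| = Real.sqrt (p^2) := (Real.sqrt_sq_eq_abs p).symm
    rw [h1, hr]
    exact Real.sqrt_lt_sqrt (sq_nonneg p) (by nlinarith)
  have hrp : 0 < r + p := by rcases abs_lt.mp hrabs with ⟨h1, h2⟩; linarith
  have hrm : 0 < r - p := by rcases abs_lt.mp hrabs with ⟨h1, h2⟩; linarith
  set a : ℝ := Real.sqrt ((r+p)/2) with hadef
  set b : ℝ := Real.sqrt ((r-p)/2) with hbdef
  have ha : 0 < a := Real.sqrt_pos.mpr (by linarith)
  have hb : 0 < b := Real.sqrt_pos.mpr (by linarith)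
  have ha2 : a^2 = (r+p)/2 := Real.sq_sqrt (by linarith)
  have hb2 : b^2 = (r-p)/2 := Real.sq_sqrt (by linarith)
  have hp : a^2 - b^2 = p := by rw [ha2, hb2]; ring
  have hq' : 2*a*b = q := by
    have h1 : (2*a*b)^2 = q^2 := by nlinarith
    have h2 : 0 ≤ 2*a*b := by positivity
    nlinarith
  rw [← hp, ← hq']
  exact core_integral a b ha hb

lemma sq_image_Ioi : (fun u : ℝ => u^2) '' Ioi 0 = Ioi 0 := by
  ext y
  constructor
  · rintro ⟨u, hu, rfl⟩
    have hu' : (0:ℝ) < u := hu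
    exact mem_Ioi.mpr (by positivity)
  · intro hy
    exact ⟨Real.sqrt y, mem_Ioi.mpr (Real.sqrt_pos.mpr hy), Real.sq_sqrt (le_of_lt hy)⟩

lemma sq_injOn : InjOn (fun u : ℝ => u^2) (Ioi 0) := by
  intro u hu v hv h
  have hu' : (0:ℝ) < u := hu
  have hv' : (0:ℝ) < v := hv
  simp only at h
  nlinarith

lemma subst_sq (g : ℝ → ℝ) :
    ∫ y in Ioi (0:ℝ), g y = ∫ u in Ioi (0:ℝ), |2*u| • g (u^2) := by
  conv_lhs => rw [← sq_image_Ioi]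
  exact integral_image_eq_integral_abs_deriv_smul measurableSet_Ioi
    (fun u _ => (by simpa using (hasDerivAt_pow 2 u) :
      HasDerivAt (fun u : ℝ => u^2) (2*u) u).hasDerivWithinAt)
    sq_injOn g

lemma main_integral (t : ℝ) (ht : 0 < t) (x : ℝ) :
    ∫ y in Ioi (0:ℝ),
        Real.sqrt (2 * π * y) * ((x - y) / ((x - y) ^ 2 + t ^ 2) + y / (y ^ 2 + 1))
      = Real.sqrt (2*π) * (-(π * Real.sqrt ((1:ℝ)/2))
          + π * Real.sqrt ((Real.sqrt (x^2+t^2) - x)/2)) := by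
  rw [subst_sq]
  have hEq : ∀ u ∈ Ioi (0:ℝ),
      |2*u| • (Real.sqrt (2 * π * u^2) *
        ((x - u^2) / ((x - u^2) ^ 2 + t ^ 2) + u^2 / ((u^2) ^ 2 + 1)))
      = Real.sqrt (2*π) * (fpq 0 1 u - fpq x t u) := by
    intro u hu
    have hu' : (0:ℝ) < u := hu
    have h1 : Real.sqrt (2 * π * u^2) = Real.sqrt (2*π) * u := by
      rw [show 2 * π * u^2 = (2*π) * u^2 by ring,
        Real.sqrt_mul (by positivity) (u^2), Real.sqrt_sq hu'.le]
    have h2 : |2*u| = 2*u := abs_of_pos (by positivity)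
    rw [h1, h2, smul_eq_mul]
    have hd1 : ((x - u^2) ^ 2 + t ^ 2) ≠ 0 := by positivity
    have hd2 : ((u^2) ^ 2 + 1 : ℝ) ≠ 0 := by positivity
    have hd3 : ((u^2-x) ^ 2 + t ^ 2) ≠ 0 := by positivity
    unfold fpq
    rw [div_add_div _ _ hd1 hd2]
    field_simp
    ring
  rw [setIntegral_congr_fun measurableSet_Ioi hEq]
  rw [MeasureTheory.integral_const_mul]
  have hsub : ∫ u in Ioi (0:ℝ), (fpq 0 1 u - fpq x t u)
      = (∫ u in Ioi (0:ℝ), fpq 0 1 u) - ∫ u in Ioi (0:ℝ), fpq x t u :=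
    integral_sub ((fpq_integrable 0 1 one_pos).integrableOn)
      ((fpq_integrable x t ht).integrableOn)
  rw [hsub, core_pq 0 1 one_pos, core_pq x t ht]
  norm_num

/-- Explicit modified conjugate Poisson transform of `Ω(x) = √(2πx)·1_{x>0}`:
`Q̃_tΩ(x) = (1/π)∫₀^∞ √(2πy)((x-y)/((x-y)²+t²) + y/(y²+1)) dy
         = -√π + √(π(√(x²+t²)-x))`. -/
theorem modified_conjPoisson_of_sqrt_weight
    (Ω : ℝ → ℝ) (hΩ : ∀ y, Ω y = if 0 < y then Real.sqrt (2 * π * y) else 0)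
    (t : ℝ) (ht : 0 < t) (x : ℝ) :
    ((1 / π) * ∫ y : ℝ, Ω y * ((x - y) / ((x - y) ^ 2 + t ^ 2) + y / (y ^ 2 + 1)))
        = (1 / π) * ∫ y in Ioi (0 : ℝ),
            Real.sqrt (2 * π * y) * ((x - y) / ((x - y) ^ 2 + t ^ 2) + y / (y ^ 2 + 1)) ∧
    ((1 / π) * ∫ y : ℝ, Ω y * ((x - y) / ((x - y) ^ 2 + t ^ 2) + y / (y ^ 2 + 1)))
        = -Real.sqrt π + Real.sqrt (π * (Real.sqrt (x ^ 2 + t ^ 2) - x)) := by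
  have hfun : (fun y : ℝ => Ω y * ((x - y) / ((x - y) ^ 2 + t ^ 2) + y / (y ^ 2 + 1)))
      = (Ioi (0:ℝ)).indicator (fun y =>
          Real.sqrt (2 * π * y) * ((x - y) / ((x - y) ^ 2 + t ^ 2) + y / (y ^ 2 + 1))) := by
    funext y
    rw [hΩ]
    by_cases h : 0 < y
    · rw [if_pos h, indicator_of_mem (mem_Ioi.mpr h)]
    · rw [if_neg h, indicator_of_notMem (by simpa using h), zero_mul]
  have e1 : (∫ y : ℝ, Ω y * ((x - y) / ((x - y) ^ 2 + t ^ 2) + y / (y ^ 2 + 1)))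
      = ∫ y in Ioi (0:ℝ),
          Real.sqrt (2 * π * y) * ((x - y) / ((x - y) ^ 2 + t ^ 2) + y / (y ^ 2 + 1)) := by
    rw [hfun, integral_indicator measurableSet_Ioi]
  constructor
  · rw [e1]
  · rw [e1, main_integral t ht x]
    have hπ : (0:ℝ) < π := Real.pi_pos
    have hrx : x ≤ Real.sqrt (x^2+t^2) := by
      calc x ≤ |x| := le_abs_self x
        _ = Real.sqrt (x^2) := (Real.sqrt_sq_eq_abs x).symm
        _ ≤ Real.sqrt (x^2+t^2) := Real.sqrt_le_sqrt (by nlinarith)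
    have hA : Real.sqrt (2*π) * Real.sqrt ((1:ℝ)/2) = Real.sqrt π := by
      rw [← Real.sqrt_mul (by positivity)]
      congr 1
      ring
    have hB : Real.sqrt (2*π) * Real.sqrt ((Real.sqrt (x^2+t^2) - x)/2)
        = Real.sqrt (π * (Real.sqrt (x^2+t^2) - x)) := by
      rw [← Real.sqrt_mul (by positivity)]
      congr 1
      ring
    have e2 : Real.sqrt (2*π) * (-(π * Real.sqrt ((1:ℝ)/2))
          + π * Real.sqrt ((Real.sqrt (x^2+t^2) - x)/2))
        = π * (-(Real.sqrt (2*π) * Real.sqrt ((1:ℝ)/2))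
          + Real.sqrt (2*π) * Real.sqrt ((Real.sqrt (x^2+t^2) - x)/2)) := by ring
    rw [e2, hA, hB]
    field_simp
end

section
/- For every t > 0, the function x ↦ √(π(√(t²+x²) − x)) / (2√(t²+x²)) on ℝ attains its supremum at x = −t/√3, and sup_{x∈ℝ} √(π(√(t²+x²) − x)) / (2√(t²+x²)) = √π · 3^{3/4} / (4√t). -/
open MeasureTheory Real Set

/-- The function `x ↦ √(π(√(t²+x²)-x))/(2√(t²+x²))` attains its supremum at
`x = -t/√3`, with supremum value `√π·3^{3/4}/(4√t)`. -/
theorem sup_modified_hilbert_deriv (t : ℝ) (ht : 0 < t) :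
    (∀ x : ℝ, Real.sqrt (π * (Real.sqrt (t ^ 2 + x ^ 2) - x)) /
        (2 * Real.sqrt (t ^ 2 + x ^ 2)) ≤
      Real.sqrt π * (3 : ℝ) ^ ((3 : ℝ) / 4) / (4 * Real.sqrt t)) ∧
    Real.sqrt (π * (Real.sqrt (t ^ 2 + (-t / Real.sqrt 3) ^ 2) - (-t / Real.sqrt 3))) /
        (2 * Real.sqrt (t ^ 2 + (-t / Real.sqrt 3) ^ 2))
      = Real.sqrt π * (3 : ℝ) ^ ((3 : ℝ) / 4) / (4 * Real.sqrt t) := by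
  have hs0 : (0:ℝ) < Real.sqrt 3 := Real.sqrt_pos.mpr (by norm_num)
  have hs2 : Real.sqrt 3 ^ 2 = 3 := Real.sq_sqrt (by norm_num)
  have hs17 : (1.7:ℝ) < Real.sqrt 3 := by nlinarith [hs2, hs0]
  have p34 : (3:ℝ) ^ ((3:ℝ)/4) = Real.sqrt 3 * Real.sqrt (Real.sqrt 3) := by
    rw [Real.sqrt_eq_rpow, Real.sqrt_eq_rpow, ← Real.rpow_mul (by norm_num),
      ← Real.rpow_add (by norm_num)]
    norm_num
  constructor
  · intro x
    set r := Real.sqrt (t ^ 2 + x ^ 2) with hrdef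
    have hrpos : 0 < r := Real.sqrt_pos.mpr (by positivity)
    have hr2 : r ^ 2 = t ^ 2 + x ^ 2 := Real.sq_sqrt (by positivity)
    have hxr : |x| ≤ r := by
      rw [← Real.sqrt_sq_eq_abs]; exact Real.sqrt_le_sqrt (by nlinarith)
    have hx1 : -r ≤ x := (abs_le.mp hxr).1
    have hx2 : x ≤ r := (abs_le.mp hxr).2
    have htr : t ≤ r := by nlinarith
    have hA : 0 ≤ 3 * Real.sqrt 3 * r ^ 2 + 4 * t * x := by
      nlinarith [mul_nonneg ht.le (by linarith : (0:ℝ) ≤ x + r),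
        mul_nonneg (by linarith : (0:ℝ) ≤ r - t) hrpos.le, sq_nonneg r]
    have hQ : (3 * Real.sqrt 3 * r ^ 2 + 4 * t * x) ^ 2 - (4 * t * r) ^ 2
        = (Real.sqrt 3 * x + t) ^ 2 * (9 * x ^ 2 + 2 * Real.sqrt 3 * t * x + 11 * t ^ 2) := by
      linear_combination (9 * (Real.sqrt 3) ^ 2 * (r ^ 2 + t ^ 2 + x ^ 2)
          + 24 * Real.sqrt 3 * t * x - 16 * t ^ 2) * hr2
        + (9 * t ^ 4 + 3 * t ^ 2 * x ^ 2 - 2 * Real.sqrt 3 * t * x ^ 3) * hs2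
    have hpos2 : 0 ≤ (Real.sqrt 3 * x + t) ^ 2
        * (9 * x ^ 2 + 2 * Real.sqrt 3 * t * x + 11 * t ^ 2) :=
      mul_nonneg (sq_nonneg _) (by nlinarith [sq_nonneg (9 * x + Real.sqrt 3 * t), sq_nonneg t])
    have key : 4 * t * (r - x) ≤ 3 * Real.sqrt 3 * r ^ 2 := by
      have h1 : (4 * t * r) ^ 2 ≤ (3 * Real.sqrt 3 * r ^ 2 + 4 * t * x) ^ 2 := by linarith
      have h2 : 4 * t * r ≤ 3 * Real.sqrt 3 * r ^ 2 + 4 * t * x := by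
        nlinarith [mul_pos ht hrpos]
      linarith
    have hR2 : (Real.sqrt π * (3:ℝ) ^ ((3:ℝ)/4) / (4 * Real.sqrt t)) ^ 2
        = π * (3 * Real.sqrt 3) / (16 * t) := by
      rw [p34, div_pow, mul_pow, mul_pow, Real.sq_sqrt Real.pi_pos.le,
        Real.sq_sqrt hs0.le, mul_pow, Real.sq_sqrt ht.le, hs2]
      ring
    rw [div_le_iff₀ (by positivity : (0:ℝ) < 2 * r)]
    have hineq : π * (r - x) ≤ (Real.sqrt π * (3:ℝ) ^ ((3:ℝ)/4) / (4 * Real.sqrt t) * (2 * r)) ^ 2 := by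
      rw [mul_pow, hR2]
      rw [div_mul_eq_mul_div, le_div_iff₀ (by positivity : (0:ℝ) < 16 * t)]
      nlinarith [mul_le_mul_of_nonneg_left key Real.pi_pos.le, Real.pi_pos]
    calc Real.sqrt (π * (r - x))
        ≤ Real.sqrt ((Real.sqrt π * (3:ℝ) ^ ((3:ℝ)/4) / (4 * Real.sqrt t) * (2 * r)) ^ 2) :=
          Real.sqrt_le_sqrt hineq
      _ = Real.sqrt π * (3:ℝ) ^ ((3:ℝ)/4) / (4 * Real.sqrt t) * (2 * r) :=
          Real.sqrt_sq (by positivity)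
  · have hx0sq : t ^ 2 + (-t / Real.sqrt 3) ^ 2 = (2 * t / Real.sqrt 3) ^ 2 := by
      rw [div_pow, div_pow, hs2]; ring
    have hrr : Real.sqrt (t ^ 2 + (-t / Real.sqrt 3) ^ 2) = 2 * t / Real.sqrt 3 := by
      rw [hx0sq, Real.sqrt_sq (by positivity)]
    have h3 : 2 * t / Real.sqrt 3 - (-t / Real.sqrt 3) = Real.sqrt 3 * t := by
      field_simp
      linear_combination (-1 : ℝ) * hs2
    rw [hrr, h3, Real.sqrt_mul Real.pi_pos.le, Real.sqrt_mul hs0.le, p34]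
    rw [div_eq_div_iff (by positivity) (by positivity)]
    have hti : Real.sqrt t * Real.sqrt t = t := Real.mul_self_sqrt ht.le
    have hsi : Real.sqrt (Real.sqrt 3) * Real.sqrt (Real.sqrt 3) = Real.sqrt 3 :=
      Real.mul_self_sqrt hs0.le
    field_simp
    linear_combination 4 * hti
end
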